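/- In a Lorentzian pre-length space, for every x ∈ X the chronological future I⁺(x) = {y : x ≪ y} and the chronological past I⁻(x) = {y : y ≪ x} are open subsets of X with respect to the metric topology. -/

import Mathlib

open scoped ENNReal NNReal

/-- A Lorentzian pre-length space: a metric space `X` with a preorder `causal` (≤),
a transitive relation `chron` (≪) contained in `causal`, and a lower semicontinuous
time separation function `tau : X × X → [0,∞]` satisfying the reverse triangle
inequality on causal chains, `tau x y = 0` if `¬ causal x y`, and `tau x y > 0 ↔ chron x y`. -/
structure LorentzianPreLengthSpace (X : Type*) [MetricSpace X] where
  causal : X → X → Prop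
  chron : X → X → Prop
  tau : X → X → ℝ≥0∞
  causal_refl : ∀ x, causal x x
  causal_trans : ∀ {x y z}, causal x y → causal y z → causal x z
  chron_trans : ∀ {x y z}, chron x y → chron y z → chron x z
  chron_imp_causal : ∀ {x y}, chron x y → causal x y
  tau_lsc : LowerSemicontinuous (fun p : X × X => tau p.1 p.2)
  rev_triangle : ∀ {x y z}, causal x y → causal y z → tau x y + tau y z ≤ tau x z
  tau_eq_zero_of_not_causal : ∀ {x y}, ¬ causal x y → tau x y = 0
  tau_pos_iff : ∀ {x y}, 0 < tau x y ↔ chron x y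

variable {X : Type*} [MetricSpace X]

/-- A future-directed causal curve on `[a,b]`: non-constant, Lipschitz on `[a,b]`,
with causally related values. -/
def IsCausalCurve (L : LorentzianPreLengthSpace X) (γ : ℝ → X) (a b : ℝ) : Prop :=
  a < b ∧ (∃ s ∈ Set.Icc a b, ∃ t ∈ Set.Icc a b, γ s ≠ γ t) ∧
  (∃ K : ℝ≥0, LipschitzOnWith K γ (Set.Icc a b)) ∧
  ∀ s t, a ≤ s → s < t → t ≤ b → L.causal (γ s) (γ t)

/-- A future-directed timelike curve on `[a,b]`. -/
def IsTimelikeCurve (L : LorentzianPreLengthSpace X) (γ : ℝ → X) (a b : ℝ) : Prop :=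
  a < b ∧ (∃ s ∈ Set.Icc a b, ∃ t ∈ Set.Icc a b, γ s ≠ γ t) ∧
  (∃ K : ℝ≥0, LipschitzOnWith K γ (Set.Icc a b)) ∧
  ∀ s t, a ≤ s → s < t → t ≤ b → L.chron (γ s) (γ t)

/-- The τ-length of a curve on `[a,b]`: the infimum over all partitions
`a = t₀ < t₁ < ... < t_N = b` of `Σᵢ τ(γ(tᵢ), γ(t_{i+1}))`. -/
noncomputable def tauLength (L : LorentzianPreLengthSpace X) (γ : ℝ → X) (a b : ℝ) : ℝ≥0∞ :=
  ⨅ (N : ℕ) (t : Fin (N + 1) → ℝ) (_ : StrictMono t) (_ : t 0 = a)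
    (_ : t (Fin.last N) = b),
    ∑ i : Fin N, L.tau (γ (t i.castSucc)) (γ (t i.succ))

/-- `I⁺(x)` and `I⁻(x)` are open. -/
theorem chronological_future_past_isOpen (L : LorentzianPreLengthSpace X) (x : X) :
    IsOpen {y : X | L.chron x y} ∧ IsOpen {y : X | L.chron y x} := by
  constructor
  · have h : LowerSemicontinuous (fun y : X => L.tau x y) :=
      LowerSemicontinuous.comp (f := fun p : X × X => L.tau p.1 p.2) L.tau_lsc (Continuous.prodMk_right x)
    have := h.isOpen_preimage 0
    convert this using 1
    ext y
    simp [L.tau_pos_iff.symm]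
  · have h : LowerSemicontinuous (fun y : X => L.tau y x) :=
      LowerSemicontinuous.comp (f := fun p : X × X => L.tau p.1 p.2) L.tau_lsc (continuous_id.prodMk continuous_const)
    have := h.isOpen_preimage 0
    convert this using 1
    ext y
    simp [L.tau_pos_iff.symm]
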